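/- Partition the Laplacian L of a directed graph with spanning tree as L = [[L_rr, 0],[L_nr,r, L_nn]] according to root nodes and non-root nodes. Then the block L_rr is singular (it is itself a graph Laplacian with zero row sums), and the block L_nn is nonsingular. -/

import Mathlib

open Matrix

/-- Partitioning the Laplacian of a graph with a spanning tree according to root nodes (`inl`)
and non-root nodes (`inr`), the root block `L_rr` is singular and the non-root block `L_nn`
is nonsingular. -/
theorem stmt10 {r s : ℕ} (hr : 0 < r) (hs : 0 < s)
    (e : (Fin r ⊕ Fin s) → (Fin r ⊕ Fin s) → ℝ) (he : ∀ i j, 0 ≤ e i j)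
    (IsRoot : (Fin r ⊕ Fin s) → Prop)
    (hroot : ∀ v, IsRoot v ↔ ∀ k, Relation.ReflTransGen (fun a b => 0 < e b a) v k)
    (hR : ∀ a : Fin r, IsRoot (Sum.inl a))
    (hNR : ∀ b : Fin s, ¬ IsRoot (Sum.inr b))
    (L : Matrix (Fin r ⊕ Fin s) (Fin r ⊕ Fin s) ℝ)
    (hL : L = Matrix.diagonal (fun i => ∑ j, e i j) - Matrix.of e) :
    (L.toBlocks₁₁).det = 0 ∧ (L.toBlocks₂₂).det ≠ 0 := by
  subst hL
  -- roots receive no edges from non-roots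
  have key1 : ∀ (a : Fin r) (b : Fin s), e (Sum.inl a) (Sum.inr b) = 0 := by
    intro a b
    by_contra h
    have hpos : 0 < e (Sum.inl a) (Sum.inr b) := lt_of_le_of_ne (he _ _) (Ne.symm h)
    apply hNR b
    rw [hroot]
    intro k
    exact Relation.ReflTransGen.head hpos ((hroot _).mp (hR a) k)
  constructor
  · rw [← Matrix.exists_mulVec_eq_zero_iff]
    refine ⟨fun _ => 1, ?_, ?_⟩
    · intro h
      have := congrFun h ⟨0, hr⟩
      simp at this
    · funext a
      have : ∀ a' : Fin r,
          (Matrix.diagonal (fun i => ∑ j, e i j) - Matrix.of e).toBlocks₁₁ a a'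
          = (if a = a' then ∑ j, e (Sum.inl a) j else 0) - e (Sum.inl a) (Sum.inl a') := by
        intro a'
        simp [Matrix.toBlocks₁₁, Matrix.diagonal_apply, Sum.inl.injEq]
      simp only [Matrix.mulVec, dotProduct, this, mul_one, Pi.zero_apply]
      rw [Finset.sum_sub_distrib, Finset.sum_ite_eq Finset.univ a
        (fun _ => ∑ j, e (Sum.inl a) j)]
      simp only [Finset.mem_univ, if_true]
      rw [Fintype.sum_sum_type]
      simp [key1]
  · intro hdet
    rw [← Matrix.exists_mulVec_eq_zero_iff] at hdet
    obtain ⟨x, hx0, hx⟩ := hdet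
    haveI : Nonempty (Fin s) := ⟨⟨0, hs⟩⟩
    set A := (Matrix.diagonal (fun i => ∑ j, e i j) - Matrix.of e).toBlocks₂₂ with hA
    have hAapp : ∀ i b : Fin s, A i b =
        (if i = b then ∑ j, e (Sum.inr i) j else 0) - e (Sum.inr i) (Sum.inr b) := by
      intro i b
      simp [hA, Matrix.toBlocks₂₂, Matrix.diagonal_apply, Sum.inr.injEq]
    set M := Finset.univ.sup' (Finset.univ_nonempty) (fun b : Fin s => |x b|) with hM
    have hMle : ∀ b : Fin s, |x b| ≤ M := by
      intro b
      rw [hM]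
      exact Finset.le_sup' (fun b : Fin s => |x b|) (Finset.mem_univ b)
    have hMpos : 0 < M := by
      obtain ⟨b, hb⟩ := Function.ne_iff.mp hx0
      calc (0:ℝ) < |x b| := abs_pos.mpr hb
        _ ≤ M := hMle b
    -- key propagation claim
    have claim : ∀ i : Fin s, |x i| = M → ∀ u, 0 < e (Sum.inr i) u →
        ∃ b, u = Sum.inr b ∧ |x b| = M := by
      intro i hi u hu
      have hrow : Finset.univ.sum (fun b => A i b * x b) = 0 := congrFun hx i
      have hD : (∑ j, e (Sum.inr i) j) * x i = ∑ b, e (Sum.inr i) (Sum.inr b) * x b := by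
        have : ∑ b, ((if i = b then ∑ j, e (Sum.inr i) j else 0)
            - e (Sum.inr i) (Sum.inr b)) * x b = 0 := by
          have h1 : ∀ b, ((if i = b then ∑ j, e (Sum.inr i) j else 0)
              - e (Sum.inr i) (Sum.inr b)) * x b = A i b * x b := fun b => by rw [hAapp]
          rw [Finset.sum_congr rfl (fun b _ => h1 b), hrow]
        simp only [sub_mul, Finset.sum_sub_distrib, sub_eq_zero, ite_mul, zero_mul] at this
        rwa [Finset.sum_ite_eq Finset.univ i, if_pos (Finset.mem_univ i)] at this
      set D := ∑ j, e (Sum.inr i) j with hDdef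
      have hEle : ∑ b, e (Sum.inr i) (Sum.inr b) ≤ D := by
        rw [hDdef, Fintype.sum_sum_type]
        have : (0:ℝ) ≤ ∑ a, e (Sum.inr i) (Sum.inl a) :=
          Finset.sum_nonneg fun a _ => he _ _
        linarith
      have chain1 : D * M ≤ ∑ b, e (Sum.inr i) (Sum.inr b) * |x b| := by
        calc D * M = |D * x i| := by
              rw [abs_mul, hi, abs_of_nonneg (Finset.sum_nonneg fun j _ => he _ _)]
          _ = |∑ b, e (Sum.inr i) (Sum.inr b) * x b| := by rw [hD]
          _ ≤ ∑ b, |e (Sum.inr i) (Sum.inr b) * x b| := Finset.abs_sum_le_sum_abs _ _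
          _ = ∑ b, e (Sum.inr i) (Sum.inr b) * |x b| := by
              refine Finset.sum_congr rfl fun b _ => ?_
              rw [abs_mul, abs_of_nonneg (he _ _)]
      have chain2 : ∑ b, e (Sum.inr i) (Sum.inr b) * |x b|
          ≤ (∑ b, e (Sum.inr i) (Sum.inr b)) * M := by
        rw [Finset.sum_mul]
        exact Finset.sum_le_sum fun b _ =>
          mul_le_mul_of_nonneg_left (hMle b) (he _ _)
      have chain3 : (∑ b, e (Sum.inr i) (Sum.inr b)) * M ≤ D * M :=
        mul_le_mul_of_nonneg_right hEle (le_of_lt hMpos)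
      have heq2 : (∑ b, e (Sum.inr i) (Sum.inr b)) * M = D * M := le_antisymm chain3 (by linarith)
      have heq1 : ∑ b, e (Sum.inr i) (Sum.inr b) * |x b|
          = (∑ b, e (Sum.inr i) (Sum.inr b)) * M := le_antisymm chain2 (by linarith)
      -- no edges from roots into i
      have hnoroot : ∀ a : Fin r, e (Sum.inr i) (Sum.inl a) = 0 := by
        have hsum : ∑ a, e (Sum.inr i) (Sum.inl a) = 0 := by
          have : ∑ b, e (Sum.inr i) (Sum.inr b) = D :=
            mul_right_cancel₀ (ne_of_gt hMpos) heq2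
          rw [hDdef, Fintype.sum_sum_type] at this
          linarith
        intro a
        exact (Finset.sum_eq_zero_iff_of_nonneg (fun a _ => he _ _)).mp hsum a
          (Finset.mem_univ a)
      -- positive-weight in-neighbors attain the max
      have hattain : ∀ b : Fin s, 0 < e (Sum.inr i) (Sum.inr b) → |x b| = M := by
        have hz : ∀ b ∈ Finset.univ, e (Sum.inr i) (Sum.inr b) * (M - |x b|) = 0 := by
          refine (Finset.sum_eq_zero_iff_of_nonneg fun b _ =>
            mul_nonneg (he _ _) (sub_nonneg.mpr (hMle b))).mp ?_
          have : ∑ b, e (Sum.inr i) (Sum.inr b) * (M - |x b|)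
              = (∑ b, e (Sum.inr i) (Sum.inr b)) * M
                - ∑ b, e (Sum.inr i) (Sum.inr b) * |x b| := by
            rw [Finset.sum_mul, ← Finset.sum_sub_distrib]
            exact Finset.sum_congr rfl fun b _ => by ring
          rw [this, heq1, sub_self]
        intro b hb
        have := hz b (Finset.mem_univ b)
        rcases mul_eq_zero.mp this with h | h
        · exact absurd h (ne_of_gt hb)
        · linarith [sub_eq_zero.mp h]
      cases u with
      | inl a => exact absurd hu (by rw [hnoroot a]; exact lt_irrefl 0)
      | inr b => exact ⟨b, rfl, hattain b hu⟩
    -- pick a max-attaining index and walk back to a root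
    obtain ⟨i0, _, hi0⟩ := Finset.exists_mem_eq_sup' (Finset.univ_nonempty)
      (fun b : Fin s => |x b|)
    have hpath : Relation.ReflTransGen (fun a b => 0 < e b a)
        (Sum.inl (⟨0, hr⟩ : Fin r)) (Sum.inr i0) :=
      (hroot _).mp (hR _) _
    have : ∃ b, (Sum.inl (⟨0, hr⟩ : Fin r) : Fin r ⊕ Fin s) = Sum.inr b ∧ |x b| = M := by
      refine Relation.ReflTransGen.head_induction_on hpath ⟨i0, rfl, hi0.symm⟩ ?_
      intro a c h' _ ih
      obtain ⟨b', hb', hxb'⟩ := ih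
      subst hb'
      exact claim b' hxb' a h'
    obtain ⟨b, hb, -⟩ := this
    exact Sum.inl_ne_inr hb
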